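/- Let S be the right shift on ℓ²(ℕ) (S(a₁,a₂,…) = (0,a₁,a₂,…)) with adjoint S* the left shift, and let z ∈ ℂ satisfy z² − z + 1 = 0. Then on ℓ²(ℕ) ⊕ ℓ²(ℕ) the operators χ⁺ = [[z S S*, S],[S*, z̄ S*S]] and χ⁻ = [[S*S − z S S*, −S],[−S*, z S*S]] are complementary projections: (χ⁺)² = χ⁺, (χ⁻)² = χ⁻, χ⁺ + χ⁻ = 1. Moreover, writing sgn := χ⁺ − χ⁻ in block form, the diagonal-related operators 1 ± s_rr are invertible on ℓ²(ℕ), while s_r⊥ = 2S* has a one-dimensional null space and s_⊥r = 2S is not surjective. -/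

import Mathlib

open ContinuousLinearMap

noncomputable section

set_option maxHeartbeats 2000000

/-- The Hilbert space `ℓ²(ℕ)` of square-summable complex sequences. -/
abbrev Hseq : Type := lp (fun _ : ℕ => ℂ) 2

/-- The `2×2` block operator `[[A,B],[C,D]]` on `E × F`. -/
def blockOp {E F : Type*} [NormedAddCommGroup E] [NormedSpace ℂ E]
    [NormedAddCommGroup F] [NormedSpace ℂ F]
    (A : E →L[ℂ] E) (B : F →L[ℂ] E) (C : E →L[ℂ] F) (D : F →L[ℂ] F) :
    (E × F) →L[ℂ] (E × F) :=
  (A.comp (ContinuousLinearMap.fst ℂ E F) + B.comp (ContinuousLinearMap.snd ℂ E F)).prod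
    (C.comp (ContinuousLinearMap.fst ℂ E F) + D.comp (ContinuousLinearMap.snd ℂ E F))

section BlockLemmas

variable {E F : Type*} [NormedAddCommGroup E] [NormedSpace ℂ E]
    [NormedAddCommGroup F] [NormedSpace ℂ F]

theorem blockOp_comp (A A' : E →L[ℂ] E) (B B' : F →L[ℂ] E) (C C' : E →L[ℂ] F) (D D' : F →L[ℂ] F) :
    (blockOp A B C D).comp (blockOp A' B' C' D') =
      blockOp (A.comp A' + B.comp C') (A.comp B' + B.comp D')
        (C.comp A' + D.comp C') (C.comp B' + D.comp D') := by
  refine ContinuousLinearMap.ext fun x => ?_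
  simp only [blockOp, comp_apply, prod_apply, add_apply, coe_fst', coe_snd', map_add]
  refine Prod.ext ?_ ?_ <;> simp <;> abel

theorem blockOp_add (A A' : E →L[ℂ] E) (B B' : F →L[ℂ] E) (C C' : E →L[ℂ] F) (D D' : F →L[ℂ] F) :
    blockOp A B C D + blockOp A' B' C' D' = blockOp (A + A') (B + B') (C + C') (D + D') := by
  refine ContinuousLinearMap.ext fun x => ?_
  simp only [blockOp, comp_apply, prod_apply, add_apply, coe_fst', coe_snd']
  refine Prod.ext ?_ ?_ <;> simp <;> abel

theorem blockOp_sub (A A' : E →L[ℂ] E) (B B' : F →L[ℂ] E) (C C' : E →L[ℂ] F) (D D' : F →L[ℂ] F) :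
    blockOp A B C D - blockOp A' B' C' D' = blockOp (A - A') (B - B') (C - C') (D - D') := by
  refine ContinuousLinearMap.ext fun x => ?_
  simp only [blockOp, comp_apply, prod_apply, add_apply, sub_apply, coe_fst', coe_snd']
  refine Prod.ext ?_ ?_ <;> simp <;> abel

theorem blockOp_one :
    blockOp (1 : E →L[ℂ] E) (0 : F →L[ℂ] E) (0 : E →L[ℂ] F) (1 : F →L[ℂ] F) = 1 := by
  refine ContinuousLinearMap.ext fun x => ?_
  simp [blockOp]

end BlockLemmas

/-- Let `S` be the right shift on `ℓ²(ℕ)` (with adjoint the left shift) and let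
`z² - z + 1 = 0`.  Then `χ⁺ = [[zSS*, S],[S*, z̄S*S]]` and
`χ⁻ = [[S*S - zSS*, -S],[-S*, zS*S]]` are complementary projections on `ℓ² ⊕ ℓ²`;
writing `sgn = χ⁺ - χ⁻ = [[2zSS* - S*S, 2S],[2S*, (z̄-z)S*S]]`, the operators `1 ± s_rr`
are invertible, while `s_r⊥ = 2S*` has a one-dimensional null space and `s_⊥r = 2S` is
not surjective. -/
theorem stmt8 (S : Hseq →L[ℂ] Hseq)
    (hS : ∀ (f : Hseq) (m : ℕ), (S f : ∀ _ : ℕ, ℂ) m = if m = 0 then 0 else f (m - 1))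
    (z : ℂ) (hz : z ^ 2 - z + 1 = 0) :
    (blockOp (z • (S.comp (adjoint S))) S (adjoint S)
        ((starRingEnd ℂ z) • ((adjoint S).comp S))).comp
      (blockOp (z • (S.comp (adjoint S))) S (adjoint S)
        ((starRingEnd ℂ z) • ((adjoint S).comp S)))
      = blockOp (z • (S.comp (adjoint S))) S (adjoint S)
        ((starRingEnd ℂ z) • ((adjoint S).comp S)) ∧
    (blockOp ((adjoint S).comp S - z • (S.comp (adjoint S))) (-S) (-(adjoint S))
        (z • ((adjoint S).comp S))).comp
      (blockOp ((adjoint S).comp S - z • (S.comp (adjoint S))) (-S) (-(adjoint S))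
        (z • ((adjoint S).comp S)))
      = blockOp ((adjoint S).comp S - z • (S.comp (adjoint S))) (-S) (-(adjoint S))
        (z • ((adjoint S).comp S)) ∧
    blockOp (z • (S.comp (adjoint S))) S (adjoint S) ((starRingEnd ℂ z) • ((adjoint S).comp S)) +
        blockOp ((adjoint S).comp S - z • (S.comp (adjoint S))) (-S) (-(adjoint S))
          (z • ((adjoint S).comp S)) = 1 ∧
    blockOp (z • (S.comp (adjoint S))) S (adjoint S) ((starRingEnd ℂ z) • ((adjoint S).comp S)) -
        blockOp ((adjoint S).comp S - z • (S.comp (adjoint S))) (-S) (-(adjoint S))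
          (z • ((adjoint S).comp S))
      = blockOp ((2 : ℂ) • (z • (S.comp (adjoint S))) - (adjoint S).comp S) ((2 : ℂ) • S)
          ((2 : ℂ) • adjoint S) ((starRingEnd ℂ z - z) • ((adjoint S).comp S)) ∧
    IsUnit ((1 : Hseq →L[ℂ] Hseq) + (starRingEnd ℂ z - z) • ((adjoint S).comp S)) ∧
    IsUnit ((1 : Hseq →L[ℂ] Hseq) - (starRingEnd ℂ z - z) • ((adjoint S).comp S)) ∧
    Module.finrank ℂ (LinearMap.ker (((2 : ℂ) • adjoint S : Hseq →L[ℂ] Hseq) : Hseq →ₗ[ℂ] Hseq)) = 1 ∧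
    ¬ Function.Surjective ((2 : ℂ) • S) := by
  -- conjugate of z
  have hconj : (starRingEnd ℂ) z = 1 - z := by
    have hz' : (starRingEnd ℂ z) ^ 2 - starRingEnd ℂ z + 1 = 0 := by
      have := congrArg (starRingEnd ℂ) hz
      simpa using this
    have hne : z ≠ starRingEnd ℂ z := by
      intro h
      have him : z.im = 0 := Complex.conj_eq_iff_im.mp h.symm
      have hre := congrArg Complex.re hz
      simp [Complex.sub_re, Complex.add_re, Complex.one_re, pow_two, Complex.mul_re, him] at hre
      nlinarith [hre]
    have hd : (z - starRingEnd ℂ z) * (z + starRingEnd ℂ z - 1) = 0 := by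
      linear_combination hz - hz'
    rcases mul_eq_zero.mp hd with h | h
    · exact absurd (sub_eq_zero.mp h) hne
    · linear_combination h
  -- S* S = 1
  have hTS : (adjoint S).comp S = 1 := by
    have key : ∀ f g : Hseq, (inner ℂ (S f) (S g) : ℂ) = inner ℂ f g := by
      intro f g
      rw [lp.inner_eq_tsum, lp.inner_eq_tsum,
        Summable.tsum_eq_zero_add (lp.summable_inner (𝕜 := ℂ) (S f) (S g))]
      simp [hS, RCLike.inner_apply]
    refine ContinuousLinearMap.ext fun f => ?_
    refine ext_inner_left ℂ fun y => ?_
    simp [adjoint_inner_right, key]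
  set t := adjoint S with ht
  have hts : t * S = 1 := hTS
  have hpp : (S * t) * (S * t) = S * t := by
    rw [mul_assoc, ← mul_assoc t, hts, one_mul]
  have hps : (S * t) * S = S := by rw [mul_assoc, hts, mul_one]
  have htp : t * (S * t) = t := by rw [← mul_assoc, hts, one_mul]
  -- adjoint S formula
  have hT : ∀ (f : Hseq) (n : ℕ), (t f : ∀ _ : ℕ, ℂ) n = f (n + 1) := by
    have hsingle : ∀ n : ℕ, S (lp.single 2 n (1:ℂ)) = lp.single 2 (n+1) (1:ℂ) := by
      intro n
      refine lp.ext (funext fun m => ?_)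
      rw [hS]
      rcases m with _ | k
      · simp [lp.single_apply]
      · simp only [Nat.succ_ne_zero, if_false, Nat.add_sub_cancel]
        by_cases hk : k = n
        · subst hk; simp [lp.single_apply_self]
        · rw [lp.single_apply_ne _ _ _ hk, lp.single_apply_ne]
          omega
    have h1 : ∀ (g : Hseq) (m : ℕ), (g : ∀ _ : ℕ, ℂ) m = inner ℂ (lp.single 2 m (1:ℂ)) g := by
      intro g m
      rw [lp.inner_single_left]
      simp [RCLike.inner_apply]
    intro f n
    rw [h1, ht, adjoint_inner_right, hsingle, ← h1]
  rw [hconj]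
  refine ⟨?_, ?_, ?_, ?_, ?_, ?_, ?_, ?_⟩
  · rw [blockOp_comp]
    congr 1
    · simp only [← mul_def, smul_mul_smul_comm, hpp]
      match_scalars <;> first | ring1 | linear_combination hz | linear_combination -hz
    · simp only [← mul_def, smul_mul_assoc, mul_smul_comm, hts, hps, mul_one]
      match_scalars <;> ring
    · simp only [← mul_def, smul_mul_assoc, mul_smul_comm, hts, htp, one_mul]
      match_scalars <;> ring
    · simp only [← mul_def, smul_mul_smul_comm, hts, mul_one]
      match_scalars <;> first | ring1 | linear_combination hz | linear_combination -hz
  · rw [blockOp_comp]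
    congr 1
    · simp only [← mul_def, hts, sub_mul, mul_sub, one_mul, mul_one, neg_mul, mul_neg, neg_neg,
        smul_mul_smul_comm, smul_mul_assoc, mul_smul_comm, hpp, hps, htp]
      match_scalars <;> first | ring1 | linear_combination hz | linear_combination -hz
    · simp only [← mul_def, hts, sub_mul, mul_sub, one_mul, mul_one, neg_mul, mul_neg, neg_neg,
        smul_mul_smul_comm, smul_mul_assoc, mul_smul_comm, hpp, hps, htp]
      match_scalars <;> ring
    · simp only [← mul_def, hts, sub_mul, mul_sub, one_mul, mul_one, neg_mul, mul_neg, neg_neg,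
        smul_mul_smul_comm, smul_mul_assoc, mul_smul_comm, hpp, hps, htp]
      match_scalars <;> ring
    · simp only [← mul_def, hts, neg_mul, mul_neg, neg_neg, smul_mul_smul_comm, mul_one]
      match_scalars <;> first | ring1 | linear_combination hz | linear_combination -hz
  · rw [blockOp_add, ← blockOp_one]
    congr 1
    · rw [hTS]; match_scalars <;> ring
    · simp
    · simp
    · rw [hTS]; match_scalars <;> ring
  · rw [blockOp_sub]
    congr 1
    · match_scalars <;> ring
    · match_scalars <;> ring
    · match_scalars <;> ring
    · match_scalars <;> ring
  · rw [hTS]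
    have h2z : (2 : ℂ) - 2*z ≠ 0 := by
      intro h
      have : z = 1 := by linear_combination -h/2
      rw [this] at hz; norm_num at hz
    have heq : (1 : Hseq →L[ℂ] Hseq) + (1 - z - z) • 1 = ((2 : ℂ) - 2*z) • 1 := by
      match_scalars <;> ring
    rw [heq]
    refine ⟨⟨((2 : ℂ) - 2*z) • 1, ((2 : ℂ) - 2*z)⁻¹ • 1, ?_, ?_⟩, rfl⟩
    · rw [smul_mul_smul_comm, mul_inv_cancel₀ h2z, one_mul, one_smul]
    · rw [smul_mul_smul_comm, inv_mul_cancel₀ h2z, one_mul, one_smul]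
  · rw [hTS]
    have h2z : (2 : ℂ) * z ≠ 0 := by
      intro h
      rcases mul_eq_zero.mp h with h | h
      · norm_num at h
      · rw [h] at hz; norm_num at hz
    have heq : (1 : Hseq →L[ℂ] Hseq) - (1 - z - z) • 1 = ((2 : ℂ) * z) • 1 := by
      match_scalars <;> ring
    rw [heq]
    refine ⟨⟨((2 : ℂ) * z) • 1, ((2 : ℂ) * z)⁻¹ • 1, ?_, ?_⟩, rfl⟩
    · rw [smul_mul_smul_comm, mul_inv_cancel₀ h2z, one_mul, one_smul]
    · rw [smul_mul_smul_comm, inv_mul_cancel₀ h2z, one_mul, one_smul]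
  · have hker : LinearMap.ker (((2 : ℂ) • t : Hseq →L[ℂ] Hseq) : Hseq →ₗ[ℂ] Hseq) = Submodule.span ℂ {lp.single 2 0 (1:ℂ)} := by
      ext f
      simp only [LinearMap.mem_ker, Submodule.mem_span_singleton]
      constructor
      · intro hf
        refine ⟨(f : ∀ _ : ℕ, ℂ) 0, ?_⟩
        refine lp.ext (funext fun m => ?_)
        have hcoord : ∀ n : ℕ, (f : ∀ _ : ℕ, ℂ) (n+1) = 0 := by
          intro n
          have h2 := congrArg (fun g : Hseq => (g : ∀ _ : ℕ, ℂ) n) hf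
          simp only [ContinuousLinearMap.coe_coe, ContinuousLinearMap.coe_smul', Pi.smul_apply, lp.coeFn_smul] at h2
          rw [hT] at h2
          simpa using h2
        rcases m with _ | k
        · simp [lp.coeFn_smul, lp.single_apply_self]
        · rw [hcoord k]
          simp [lp.coeFn_smul, lp.single_apply_ne _ _ _ (Nat.succ_ne_zero k)]
      · rintro ⟨c, rfl⟩
        refine lp.ext (funext fun m => ?_)
        simp only [ContinuousLinearMap.coe_coe, ContinuousLinearMap.coe_smul', Pi.smul_apply, lp.coeFn_smul, hT,
          lp.coeFn_zero, Pi.zero_apply]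
        simp [lp.single_apply_ne _ _ _ (Nat.succ_ne_zero m)]
    rw [hker]
    refine finrank_span_singleton ?_
    intro h
    have := congrArg (fun g : Hseq => (g : ∀ _ : ℕ, ℂ) 0) h
    simp [lp.single_apply_self] at this
  · intro h
    obtain ⟨f, hf⟩ := h (lp.single 2 0 (1:ℂ))
    have h0 := congrArg (fun g : Hseq => (g : ∀ _ : ℕ, ℂ) 0) hf
    simp only [ContinuousLinearMap.coe_smul', Pi.smul_apply, lp.coeFn_smul] at h0
    rw [hS] at h0
    simp [lp.single_apply_self] at h0
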